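/- For every real number 0 < q < 1, every positive integer k, every real t > 0, and every real x > 0, the Jackson q-integral from 0 to x of s^{t-1} E_{q^k}^{-q^k s^k/[k]_q} equals (1-q) x^t ∑_{n=0}^∞ (-1)^n q^{kn(n+1)/2} x^{kn} / ( [k]_q^n [n]_{q^k}! (1-q^{kn+t}) ); explicitly, (1-q) x ∑_{m=0}^∞ q^m (q^m x)^{t-1} E_{q^k}^{-q^k (q^m x)^k/[k]_q} = (1-q) x^t ∑_{n=0}^∞ (-1)^n q^{kn(n+1)/2} x^{kn} / ( [k]_q^n [n]_{q^k}! (1-q^{kn+t}) ). -/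

import Mathlib

/-- The q-number [t]_q = (1-q^t)/(1-q). -/
noncomputable def qNum (q t : ℝ) : ℝ := (1 - q ^ t) / (1 - q)

/-- The Q-factorial [n]_Q! = ∏_{j=1}^n (1-Q^j)/(1-Q). -/
noncomputable def qFact (Q : ℝ) (n : ℕ) : ℝ :=
  ∏ j ∈ Finset.range n, (1 - Q ^ (j + 1)) / (1 - Q)

/-- The Q-exponential E_Q^x = ∑_{n=0}^∞ Q^{n(n-1)/2} x^n/[n]_Q!. -/
noncomputable def qExp (Q x : ℝ) : ℝ :=
  ∑' n : ℕ, Q ^ (n * (n - 1) / 2) * x ^ n / qFact Q n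

private lemma tri (n : ℕ) : n * (n - 1) / 2 + n = n * (n + 1) / 2 := by
  have h := Nat.choose_succ_succ n 1
  rw [Nat.choose_two_right, Nat.choose_two_right, Nat.choose_one_right,
    Nat.succ_sub_one] at h
  rw [mul_comm n (n + 1), h]
  omega

private lemma triK (k n : ℕ) : k * (n * (n - 1) / 2) + k * n = k * n * (n + 1) / 2 := by
  have h2 : 2 ∣ n * (n + 1) := (Nat.even_mul_succ_self n).two_dvd
  calc k * (n * (n - 1) / 2) + k * n = k * (n * (n - 1) / 2 + n) := (mul_add _ _ _).symm
    _ = k * (n * (n + 1) / 2) := by rw [tri]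
    _ = k * (n * (n + 1)) / 2 := (Nat.mul_div_assoc k h2).symm
    _ = k * n * (n + 1) / 2 := by rw [mul_assoc]

set_option maxHeartbeats 1000000 in
theorem jackson_integral_of_kGamma_density (q : ℝ) (hq0 : 0 < q) (hq1 : q < 1)
    (k : ℕ) (hk : 0 < k) (t : ℝ) (ht : 0 < t) (x : ℝ) (hx : 0 < x) :
    (1 - q) * x * (∑' m : ℕ, q ^ m * (q ^ m * x) ^ (t - 1) *
        qExp (q ^ k) (-(q ^ k * (q ^ m * x) ^ k / qNum q (k : ℝ)))) =
      (1 - q) * x ^ t * ∑' n : ℕ, (-1 : ℝ) ^ n * q ^ (k * n * (n + 1) / 2) * x ^ (k * n) /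
        (qNum q (k : ℝ) ^ n * qFact (q ^ k) n * (1 - q ^ ((k : ℝ) * (n : ℝ) + t))) := by
  have h1q : 0 < 1 - q := by linarith
  set Q : ℝ := q ^ k with hQdef
  have hQ0 : 0 < Q := pow_pos hq0 k
  have hQ1 : Q < 1 := pow_lt_one₀ hq0.le hq1 hk.ne'
  have h1Q : 0 < 1 - Q := by linarith
  set N : ℝ := qNum q (k : ℝ) with hNdef
  have hN : N = (1 - Q) / (1 - q) := by
    rw [hNdef, qNum, Real.rpow_natCast]
  have hN0 : 0 < N := by rw [hN]; positivity
  have hd1 : ∀ j : ℕ, (1 : ℝ) ≤ (1 - Q ^ (j + 1)) / (1 - Q) := by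
    intro j
    rw [le_div_iff₀ h1Q, one_mul]
    have h := pow_le_pow_of_le_one hQ0.le hQ1.le (show 1 ≤ j + 1 by omega)
    rw [pow_one] at h
    linarith
  have hF1 : ∀ n, (1 : ℝ) ≤ qFact Q n := by
    intro n
    induction n with
    | zero => simp [qFact]
    | succ n ih =>
      have hfe : qFact Q (n + 1) = qFact Q n * ((1 - Q ^ (n + 1)) / (1 - Q)) := by
        rw [qFact, qFact, Finset.prod_range_succ]
      rw [hfe]
      nlinarith [hd1 n]
  have hF0 : ∀ n, (0 : ℝ) < qFact Q n := fun n => lt_of_lt_of_le one_pos (hF1 n)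
  set r : ℕ → ℝ := fun n => q ^ t * q ^ (k * n) with hrdef
  have hqt0 : (0 : ℝ) < q ^ t := Real.rpow_pos_of_pos hq0 t
  have hqt1 : q ^ t < 1 := Real.rpow_lt_one hq0.le hq1 ht
  have hr0 : ∀ n, 0 < r n := fun n => mul_pos hqt0 (pow_pos hq0 _)
  have hr1 : ∀ n, r n < 1 := fun n =>
    lt_of_le_of_lt (mul_le_of_le_one_right hqt0.le (pow_le_one₀ hq0.le hq1.le)) hqt1
  set c : ℕ → ℝ := fun n => q ^ (k * n * (n + 1) / 2) * x ^ (k * n) / (N ^ n * qFact Q n)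
    with hcdef
  have hc0 : ∀ n, 0 < c n := fun n =>
    div_pos (mul_pos (pow_pos hq0 _) (pow_pos hx _)) (mul_pos (pow_pos hN0 _) (hF0 n))
  -- ratio bound for c
  have hstep : ∀ n, c (n + 1) ≤ (Q ^ (n + 1) * x ^ k / N) * c n := by
    intro n
    have hdpos : (0 : ℝ) < (1 - Q ^ (n + 1)) / (1 - Q) := lt_of_lt_of_le one_pos (hd1 n)
    have hfe : qFact Q (n + 1) = qFact Q n * ((1 - Q ^ (n + 1)) / (1 - Q)) := by
      rw [qFact, qFact, Finset.prod_range_succ]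
    have hexp : k * (n + 1) * (n + 1 + 1) / 2 = k * n * (n + 1) / 2 + k * (n + 1) := by
      have h := triK k (n + 1)
      rw [Nat.succ_sub_one] at h
      rw [← h, mul_comm (n+1) n, mul_assoc k n (n + 1),
        Nat.mul_div_assoc k (Nat.even_mul_succ_self n).two_dvd]
    have hQ1n : (0:ℝ) < 1 - Q ^ (n + 1) := by
      have h := pow_lt_one₀ hQ0.le hQ1 (show n + 1 ≠ 0 by omega)
      linarith
    have hQp : q ^ (k * n + k) = Q ^ (n + 1) := by
      rw [hQdef, ← pow_mul, Nat.mul_add, mul_one]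
    have heq : c (n + 1) = ((Q ^ (n + 1) * x ^ k / N) * c n) / ((1 - Q ^ (n + 1)) / (1 - Q)) := by
      simp only [hcdef]
      rw [hfe, hexp, Nat.mul_add k n 1, Nat.mul_one, pow_add q, pow_add x, hQp, pow_succ N]
      field_simp
    rw [heq]
    exact div_le_self (mul_nonneg (by positivity) (hc0 n).le) (hd1 n)
  have hcs : Summable c := by
    apply summable_of_ratio_norm_eventually_le (r := (1 : ℝ) / 2) (by norm_num)
    have htend : Filter.Tendsto (fun n : ℕ => Q ^ (n + 1) * x ^ k / N) Filter.atTop (nhds 0) := by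
      have h0 : Filter.Tendsto (fun n : ℕ => Q ^ n) Filter.atTop (nhds 0) :=
        tendsto_pow_atTop_nhds_zero_of_lt_one hQ0.le hQ1
      have := ((h0.comp (Filter.tendsto_add_atTop_nat 1)).mul_const (x ^ k)).div_const N
      simpa [Function.comp] using this
    filter_upwards [htend.eventually_lt_const (show (0:ℝ) < 1/2 by norm_num)] with n hn
    have h1 : c (n + 1) ≤ (1 / 2) * c n :=
      le_trans (hstep n) (mul_le_mul_of_nonneg_right hn.le (hc0 n).le)
    rw [Real.norm_eq_abs, Real.norm_eq_abs, abs_of_pos (hc0 _), abs_of_pos (hc0 _)]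
    exact h1
  set u : ℕ → ℝ := fun n => (-1 : ℝ) ^ n * c n with hudef
  -- summability of the double sum
  have hG : Summable (Function.uncurry fun m n : ℕ => x ^ (t - 1) * u n * r n ^ m) := by
    refine Summable.of_norm_bounded (g := fun p : ℕ × ℕ => (x ^ (t - 1) * (q ^ t) ^ p.1) * c p.2) ?_ ?_
    · exact Summable.mul_of_nonneg
        ((summable_geometric_of_lt_one hqt0.le hqt1).mul_left _)
        hcs (fun m => by positivity) (fun n => (hc0 n).le)
    · rintro ⟨m, n⟩
      have hxt : (0 : ℝ) < x ^ (t - 1) := Real.rpow_pos_of_pos hx _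
      have h1 : ‖x ^ (t - 1) * u n * r n ^ m‖ = x ^ (t - 1) * c n * r n ^ m := by
        rw [Real.norm_eq_abs, abs_mul, abs_mul, hudef]
        simp [abs_mul, abs_pow, abs_of_pos hxt, abs_of_pos (hc0 n), abs_of_pos (hr0 n)]
      rw [Function.uncurry_apply_pair, h1]
      have h2 : r n ^ m ≤ (q ^ t) ^ m := by
        apply pow_le_pow_left₀ (hr0 n).le
        exact mul_le_of_le_one_right hqt0.le (pow_le_one₀ hq0.le hq1.le)
      calc x ^ (t - 1) * c n * r n ^ m ≤ x ^ (t - 1) * c n * (q ^ t) ^ m := by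
            exact mul_le_mul_of_nonneg_left h2 (mul_pos hxt (hc0 n)).le
        _ = x ^ (t - 1) * (q ^ t) ^ m * c n := by ring
  -- inner expansion
  have hqExp : ∀ m : ℕ, q ^ m * (q ^ m * x) ^ (t - 1) * qExp Q (-(Q * (q ^ m * x) ^ k / N)) =
      ∑' n : ℕ, x ^ (t - 1) * u n * r n ^ m := by
    intro m
    rw [qExp, ← tsum_mul_left]
    refine tsum_congr fun n => ?_
    have hqm : (0 : ℝ) < q ^ m := pow_pos hq0 m
    have e2 : q ^ m * (q ^ m * x) ^ (t - 1) = (q ^ t) ^ m * x ^ (t - 1) := by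
      rw [Real.mul_rpow hqm.le hx.le, ← mul_assoc]
      congr 1
      rw [← Real.rpow_natCast q m, ← Real.rpow_mul hq0.le, ← Real.rpow_natCast (q ^ t) m,
        ← Real.rpow_mul hq0.le, ← Real.rpow_add hq0]
      congr 1
      ring
    rw [e2]
    simp only [hudef, hcdef, hrdef]
    rw [← triK k n, pow_add, neg_pow]
    field_simp
    rw [hQdef]
    simp only [← pow_mul, inv_pow]
    have hNn : N ^ n * N⁻¹ ^ n = 1 := by rw [← mul_pow, mul_inv_cancel₀ hN0.ne', one_pow]
    linear_combination ((q ^ t) ^ m * q ^ (m * k * n) * q ^ (k * (n * (n - 1) / 2)) * q ^ (k * n) *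
      x ^ (k * n) * (qFact (q ^ k) n)⁻¹) * hNn
  -- main computation
  have swap : (∑' m : ℕ, ∑' n : ℕ, x ^ (t - 1) * u n * r n ^ m) =
      ∑' n : ℕ, ∑' m : ℕ, x ^ (t - 1) * u n * r n ^ m := (Summable.tsum_comm hG).symm
  have inner : ∀ n : ℕ, (∑' m : ℕ, x ^ (t - 1) * u n * r n ^ m) =
      x ^ (t - 1) * (u n * (1 - r n)⁻¹) := by
    intro n
    rw [show (fun m : ℕ => x ^ (t - 1) * u n * r n ^ m) =
      fun m : ℕ => (x ^ (t - 1) * u n) * r n ^ m from rfl, tsum_mul_left,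
      tsum_geometric_of_lt_one (hr0 n).le (hr1 n), mul_assoc]
  have hrexp : ∀ n : ℕ, q ^ ((k : ℝ) * (n : ℝ) + t) = r n := by
    intro n
    rw [Real.rpow_add hq0, show ((k : ℝ) * (n : ℝ)) = ((k * n : ℕ) : ℝ) by push_cast; ring,
      Real.rpow_natCast, mul_comm]
  calc (1 - q) * x * (∑' m : ℕ, q ^ m * (q ^ m * x) ^ (t - 1) *
        qExp Q (-(Q * (q ^ m * x) ^ k / N)))
      = (1 - q) * x * (∑' m : ℕ, ∑' n : ℕ, x ^ (t - 1) * u n * r n ^ m) := by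
        rw [tsum_congr hqExp]
    _ = (1 - q) * x * (∑' n : ℕ, x ^ (t - 1) * (u n * (1 - r n)⁻¹)) := by
        rw [swap, tsum_congr inner]
    _ = (1 - q) * x * (x ^ (t - 1) * ∑' n : ℕ, u n * (1 - r n)⁻¹) := by
        rw [tsum_mul_left]
    _ = (1 - q) * x ^ t * ∑' n : ℕ, u n * (1 - r n)⁻¹ := by
        have hxx : x ^ t = x * x ^ (t - 1) := by
          nth_rewrite 1 [show t = 1 + (t - 1) by ring]
          rw [Real.rpow_add hx, Real.rpow_one]
        rw [hxx]
        ring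
    _ = (1 - q) * x ^ t * ∑' n : ℕ, (-1 : ℝ) ^ n * q ^ (k * n * (n + 1) / 2) * x ^ (k * n) /
        (N ^ n * qFact Q n * (1 - q ^ ((k : ℝ) * (n : ℝ) + t))) := by
        congr 1
        refine tsum_congr fun n => ?_
        rw [hrexp n]
        simp only [hudef, hcdef]
        have h1 : (1 : ℝ) - r n ≠ 0 := ne_of_gt (by linarith [hr1 n])
        field_simp
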